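/- For every q ∈ [0,1], every N ≥ 2 and every word (i_1, …, i_n) with entries in {1, …, N−1}, there exist finitely many reduced words w^{(1)}, …, w^{(m)} (words (j_1, …, j_ℓ) such that the permutation s_{j_1} ∘ ⋯ ∘ s_{j_ℓ} has Coxeter length ℓ) and weights λ_1, …, λ_m ≥ 0 with λ_1 + ⋯ + λ_m = 1, such that, as maps on probability measures on S_N, π_{i_n} ∘ ⋯ ∘ π_{i_1} = Σ_{j=1}^m λ_j · (π_{j_{ℓ_j}} ∘ ⋯ ∘ π_{j_1}), where (j_1, …, j_{ℓ_j}) denotes the word w^{(j)}. -/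

import Mathlib

open MeasureTheory
open scoped NNReal

/-- Equip the finite symmetric group `S_N` with the discrete (full) σ-algebra. -/
instance (N : ℕ) : MeasurableSpace (Equiv.Perm (Fin N)) := ⊤

/-- The adjacent transposition `s_i` of `{1, …, N}` exchanging `i` and `i+1`
(for `1 ≤ i ≤ N−1`; positions in `Fin N` are 0-indexed, so `s_i` swaps the
0-indexed positions `i−1` and `i`). -/
def adjT (N : ℕ) (i : {i : ℕ // 1 ≤ i ∧ i < N}) : Equiv.Perm (Fin N) :=
  Equiv.swap ⟨i.1 - 1, by omega⟩ ⟨i.1, i.2.2⟩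

/-- The operator `τ_i : η ↦ η ∘ s_i`, exchanging the entries in positions
`i` and `i+1`. -/
def tauP (N : ℕ) (i : {i : ℕ // 1 ≤ i ∧ i < N}) (η : Equiv.Perm (Fin N)) :
    Equiv.Perm (Fin N) :=
  η * adjT N i

/-- The operator `σ_i : η ↦ η ∘ s_i` if `η(i) < η(i+1)` and `η ↦ η` otherwise,
sorting positions `i`, `i+1` into decreasing order. -/
def sigmaP (N : ℕ) (i : {i : ℕ // 1 ≤ i ∧ i < N}) (η : Equiv.Perm (Fin N)) :
    Equiv.Perm (Fin N) :=
  if η ⟨i.1 - 1, by omega⟩ < η ⟨i.1, i.2.2⟩ then η * adjT N i else η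

/-- The Markov operator `π_i ν = q·(τ_i)_*ν + (1−q)·(σ_i)_*ν` on measures
on `S_N`. -/
noncomputable def piP (N : ℕ) (q : ℝ≥0) (i : {i : ℕ // 1 ≤ i ∧ i < N})
    (ν : Measure (Equiv.Perm (Fin N))) : Measure (Equiv.Perm (Fin N)) :=
  q • ν.map (tauP N i) + (1 - q) • ν.map (sigmaP N i)


open scoped ENNReal

namespace PiPProof
variable {N : ℕ}
abbrev Ltr (N : ℕ) := {i : ℕ // 1 ≤ i ∧ i < N}
abbrev P (N : ℕ) := Equiv.Perm (Fin N)
lemma meas_set (s : Set (P N)) : MeasurableSet s := trivial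
lemma meas_fn {β : Type*} [MeasurableSpace β] (f : P N → β) : Measurable f :=
  fun _ _ => trivial

lemma map_ext {ι κ : Type} [Fintype ι] [Fintype κ]
    (f : ι → P N → P N) (g : κ → P N → P N)
    (h : ∀ a, ∑ j, (Measure.dirac (f j a) : Measure (P N)) = ∑ k, Measure.dirac (g k a))
    (ν : Measure (P N)) :
    ∑ j, ν.map (f j) = ∑ k, ν.map (g k) := by
  ext s hs
  have key : ∀ a, (∑ j, (s.indicator (1 : P N → ℝ≥0∞) (f j a)))
      = ∑ k, s.indicator 1 (g k a) := by
    intro a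
    have h2 := congrArg (fun μ : Measure (P N) => μ s) (h a)
    simpa [Measure.finset_sum_apply, Measure.dirac_apply' _ hs] using h2
  have ind : ∀ (F : P N → P N), ν (F ⁻¹' s) = ∫⁻ a, s.indicator 1 (F a) ∂ν := by
    intro F
    rw [← lintegral_indicator_one (meas_set (F ⁻¹' s))]
    refine lintegral_congr fun a => ?_
    by_cases hm : F a ∈ s <;> simp [Set.indicator, hm, Set.mem_preimage]
  rw [Measure.finset_sum_apply, Measure.finset_sum_apply]
  simp only [Measure.map_apply (meas_fn _) hs, ind]
  rw [← lintegral_finset_sum _ (fun j _ => meas_fn _),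
      ← lintegral_finset_sum _ (fun k _ => meas_fn _)]
  exact lintegral_congr key


/-- positions -/
def pA (i : Ltr N) : Fin N := ⟨i.1 - 1, lt_of_le_of_lt (Nat.sub_le _ _) i.2.2⟩
def pB (i : Ltr N) : Fin N := ⟨i.1, i.2.2⟩

lemma adjT_eq (i : Ltr N) : adjT N i = Equiv.swap (pA i) (pB i) := rfl
lemma tau_eq (i : Ltr N) (b : P N) : tauP N i b = b * Equiv.swap (pA i) (pB i) := rfl
lemma sigma_eq (i : Ltr N) (b : P N) :
    sigmaP N i b = if b (pA i) < b (pB i) then b * Equiv.swap (pA i) (pB i) else b := rfl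

lemma pA_ne_pB (i : Ltr N) : pA i ≠ pB i := by
  have := i.2.1; exact Fin.ne_of_val_ne (by simp [pA, pB]; omega)

lemma piP_apply (q : ℝ≥0) (i : Ltr N) (μ : Measure (P N)) (s : Set (P N)) :
    piP N q i μ s = (q : ℝ≥0∞) * μ (tauP N i ⁻¹' s)
      + ((1 - q : ℝ≥0) : ℝ≥0∞) * μ (sigmaP N i ⁻¹' s) := by
  simp [piP, Measure.map_apply (meas_fn _) (meas_set s), ENNReal.smul_def, -Measure.coe_nnreal_smul]

-- τ∘τ = id, σ∘τ = σ, σ∘σ = σ  (as preimage identities)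
lemma tau_tau (i : Ltr N) (a : P N) : tauP N i (tauP N i a) = a := by
  simp [tau_eq, Equiv.mul_swap_mul_self]

lemma sigma_tau (i : Ltr N) (a : P N) : sigmaP N i (tauP N i a) = sigmaP N i a := by
  rcases lt_trichotomy (a (pA i)) (a (pB i)) with hc | hc | hc
  · simp [sigma_eq, tau_eq, Equiv.Perm.mul_apply, Equiv.swap_apply_left,
      Equiv.swap_apply_right, hc, asymm hc]
  · exact absurd (a.injective hc) (pA_ne_pB i)
  · simp [sigma_eq, tau_eq, Equiv.Perm.mul_apply, Equiv.swap_apply_left,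
      Equiv.swap_apply_right, hc, asymm hc, Equiv.mul_swap_mul_self]

lemma sigma_sigma (i : Ltr N) (a : P N) : sigmaP N i (sigmaP N i a) = sigmaP N i a := by
  rcases lt_trichotomy (a (pA i)) (a (pB i)) with hc | hc | hc
  · simp [sigma_eq, Equiv.Perm.mul_apply, Equiv.swap_apply_left,
      Equiv.swap_apply_right, hc, asymm hc]
  · exact absurd (a.injective hc) (pA_ne_pB i)
  · simp [sigma_eq, hc, asymm hc]


lemma M1_dirac (i : Ltr N) (a : P N) :
    (Measure.dirac (tauP N i (sigmaP N i a)) : Measure (P N)) + Measure.dirac (sigmaP N i a)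
      = Measure.dirac a + Measure.dirac (tauP N i a) := by
  rcases lt_trichotomy (a (pA i)) (a (pB i)) with hc | hc | hc
  · simp [sigma_eq, tau_eq, hc, Equiv.mul_swap_mul_self]
  · exact absurd (a.injective hc) (pA_ne_pB i)
  · simp [sigma_eq, tau_eq, hc, asymm hc, add_comm]

lemma map_ext2 (f₁ f₂ g₁ g₂ : P N → P N)
    (h : ∀ a : P N, (Measure.dirac (f₁ a) : Measure (P N)) + Measure.dirac (f₂ a)
        = Measure.dirac (g₁ a) + Measure.dirac (g₂ a)) (ν : Measure (P N)) :
    ν.map f₁ + ν.map f₂ = ν.map g₁ + ν.map g₂ := by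
  have := map_ext (ι := Fin 2) (κ := Fin 2) ![f₁, f₂] ![g₁, g₂]
    (fun a => by simpa [Fin.sum_univ_two] using h a) ν
  simpa [Fin.sum_univ_two] using this

lemma M1 (i : Ltr N) (ν : Measure (P N)) :
    ν.map (fun a => tauP N i (sigmaP N i a)) + ν.map (sigmaP N i)
      = ν.map id + ν.map (tauP N i) :=
  map_ext2 _ _ _ _ (fun a => by simpa using M1_dirac i a) ν

lemma preimage_comp3 (f g h : P N → P N) (s : Set (P N)) :
    (fun a => f (g (h a))) ⁻¹' s = h ⁻¹' (g ⁻¹' (f ⁻¹' s)) := rfl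

lemma preimage_comp2 (f g : P N → P N) (s : Set (P N)) :
    (fun a => f (g a)) ⁻¹' s = g ⁻¹' (f ⁻¹' s) := rfl

/-- the quadratic relation -/
lemma piP_quad {q : ℝ≥0} (hq : q ≤ 1) (i : Ltr N) (ν : Measure (P N)) :
    piP N q i (piP N q i ν) = q • ν + (1 - q) • piP N q i ν := by
  have hsum : (q : ℝ≥0∞) + ((1 - q : ℝ≥0) : ℝ≥0∞) = 1 := by
    rw [← ENNReal.coe_add, add_tsub_cancel_of_le hq, ENNReal.coe_one]
  ext s hs
  have hττ : tauP N i ⁻¹' (tauP N i ⁻¹' s) = s := by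
    ext a; simp [Set.mem_preimage, tau_tau i a]
  have hτσ : tauP N i ⁻¹' (sigmaP N i ⁻¹' s) = sigmaP N i ⁻¹' s := by
    ext a; simp [Set.mem_preimage, sigma_tau i a]
  have hσσ : sigmaP N i ⁻¹' (sigmaP N i ⁻¹' s) = sigmaP N i ⁻¹' s := by
    ext a; simp [Set.mem_preimage, sigma_sigma i a]
  have E := congrArg (fun μ : Measure (P N) => μ s) (M1 i ν)
  simp only [Measure.add_apply, Measure.map_apply (meas_fn _) hs, Measure.map_id,
    preimage_comp2] at E
  calc (piP N q i (piP N q i ν)) s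
      = (q:ℝ≥0∞) * ((q:ℝ≥0∞) * ν (tauP N i ⁻¹' (tauP N i ⁻¹' s))
          + ((1-q:ℝ≥0):ℝ≥0∞) * ν (sigmaP N i ⁻¹' (tauP N i ⁻¹' s)))
        + ((1-q:ℝ≥0):ℝ≥0∞) * ((q:ℝ≥0∞) * ν (tauP N i ⁻¹' (sigmaP N i ⁻¹' s))
          + ((1-q:ℝ≥0):ℝ≥0∞) * ν (sigmaP N i ⁻¹' (sigmaP N i ⁻¹' s))) := by
        simp only [piP_apply]
    _ = (q:ℝ≥0∞)*(q:ℝ≥0∞) * ν s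
        + (q:ℝ≥0∞)*((1-q:ℝ≥0):ℝ≥0∞) * (ν (sigmaP N i ⁻¹' (tauP N i ⁻¹' s)) + ν (sigmaP N i ⁻¹' s))
        + ((1-q:ℝ≥0):ℝ≥0∞)*((1-q:ℝ≥0):ℝ≥0∞) * ν (sigmaP N i ⁻¹' s) := by
        rw [hττ, hτσ, hσσ]; ring
    _ = (q:ℝ≥0∞)*(q:ℝ≥0∞) * ν s
        + (q:ℝ≥0∞)*((1-q:ℝ≥0):ℝ≥0∞) * (ν s + ν (tauP N i ⁻¹' s))
        + ((1-q:ℝ≥0):ℝ≥0∞)*((1-q:ℝ≥0):ℝ≥0∞) * ν (sigmaP N i ⁻¹' s) := by rw [E]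
    _ = ((q:ℝ≥0∞) * (((q:ℝ≥0∞)) + ((1-q:ℝ≥0):ℝ≥0∞))) * ν s
        + (q:ℝ≥0∞)*((1-q:ℝ≥0):ℝ≥0∞) * ν (tauP N i ⁻¹' s)
        + ((1-q:ℝ≥0):ℝ≥0∞)*((1-q:ℝ≥0):ℝ≥0∞) * ν (sigmaP N i ⁻¹' s) := by ring
    _ = (q • ν + (1 - q) • piP N q i ν) s := by
        rw [hsum]
        simp only [Measure.add_apply, Measure.smul_apply, ENNReal.smul_def, smul_eq_mul, piP_apply]
        ring


lemma swap_commute' {x y u v : Fin N} (h1 : x ≠ u) (h2 : x ≠ v) (h3 : y ≠ u) (h4 : y ≠ v) :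
    Equiv.swap x y * Equiv.swap u v = Equiv.swap u v * Equiv.swap x y := by
  ext z
  simp only [Equiv.Perm.mul_apply, Equiv.swap_apply_def]
  split_ifs <;> simp_all

section Comm
variable {i k : Ltr N} (hdist : i.1 + 2 ≤ k.1 ∨ k.1 + 2 ≤ i.1)
include hdist

lemma dist_ne_AA : pA i ≠ pA k := Fin.ne_of_val_ne (by simp [pA]; omega)
lemma dist_ne_AB : pA i ≠ pB k := by
  have := i.2.1; exact Fin.ne_of_val_ne (by simp [pA, pB]; omega)
lemma dist_ne_BA : pB i ≠ pA k := by
  have := k.2.1; exact Fin.ne_of_val_ne (by simp [pA, pB]; omega)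
lemma dist_ne_BB : pB i ≠ pB k := Fin.ne_of_val_ne (by simp [pB]; omega)

lemma comm_swap :
    Equiv.swap (pA i) (pB i) * Equiv.swap (pA k) (pB k)
      = Equiv.swap (pA k) (pB k) * Equiv.swap (pA i) (pB i) :=
  swap_commute' (dist_ne_AA hdist) (dist_ne_AB hdist) (dist_ne_BA hdist) (dist_ne_BB hdist)

lemma fixA : Equiv.swap (pA k) (pB k) (pA i) = pA i :=
  Equiv.swap_apply_of_ne_of_ne (dist_ne_AA hdist) (dist_ne_AB hdist)
lemma fixB : Equiv.swap (pA k) (pB k) (pB i) = pB i :=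
  Equiv.swap_apply_of_ne_of_ne (dist_ne_BA hdist) (dist_ne_BB hdist)

lemma ftt (a : P N) : tauP N i (tauP N k a) = tauP N k (tauP N i a) := by
  simp [tau_eq, mul_assoc, comm_swap hdist]

lemma fst (a : P N) : sigmaP N i (tauP N k a) = tauP N k (sigmaP N i a) := by
  by_cases hc : a (pA i) < a (pB i) <;>
    simp [sigma_eq, tau_eq, Equiv.Perm.mul_apply, fixA hdist, fixB hdist, hc,
      mul_assoc, comm_swap hdist]

lemma fts (a : P N) : tauP N i (sigmaP N k a) = sigmaP N k (tauP N i a) := by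
  have hdist' := hdist.symm
  by_cases hc : a (pA k) < a (pB k) <;>
    simp [sigma_eq, tau_eq, Equiv.Perm.mul_apply, fixA hdist', fixB hdist', hc,
      mul_assoc, comm_swap hdist]

lemma fss (a : P N) : sigmaP N i (sigmaP N k a) = sigmaP N k (sigmaP N i a) := by
  have hdist' := hdist.symm
  by_cases hc : a (pA i) < a (pB i) <;> by_cases hc' : a (pA k) < a (pB k) <;>
    simp [sigma_eq, Equiv.Perm.mul_apply, fixA hdist, fixB hdist, fixA hdist', fixB hdist',
      hc, hc', mul_assoc, comm_swap hdist]

omit hdist in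
lemma pre_comm {f g : P N → P N} (hcomm : ∀ a, f (g a) = g (f a)) (s : Set (P N)) :
    g ⁻¹' (f ⁻¹' s) = f ⁻¹' (g ⁻¹' s) := by
  ext a
  simp only [Set.mem_preimage]
  rw [show f (g a) = g (f a) from hcomm a]

omit hdist in
lemma piP_comm {q : ℝ≥0} (hd : i.1 + 2 ≤ k.1 ∨ k.1 + 2 ≤ i.1) (ν : Measure (P N)) :
    piP N q i (piP N q k ν) = piP N q k (piP N q i ν) := by
  ext s hs
  simp only [piP_apply]
  rw [pre_comm (ftt hd) s, pre_comm (fst hd) s, pre_comm (fts hd) s, pre_comm (fss hd) s]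
  ring

end Comm
section Braid
variable {i k : Ltr N} (hk : k.1 = i.1 + 1)
include hk

lemma hpAk : pA k = pB i := by
  have := i.2.1; exact Fin.ext (by simp [pA, pB]; omega)

lemma tauk_eq (b : P N) : tauP N k b = b * Equiv.swap (pB i) (pB k) := by
  rw [tau_eq, hpAk hk]

lemma sigmak_eq (b : P N) :
    sigmaP N k b = if b (pB i) < b (pB k) then b * Equiv.swap (pB i) (pB k) else b := by
  rw [sigma_eq, hpAk hk]

lemma hBC : pB i ≠ pB k := Fin.ne_of_val_ne (by simp [pB]; omega)
lemma hAC : pA i ≠ pB k := by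
  have := i.2.1; exact Fin.ne_of_val_ne (by simp [pA, pB]; omega)
lemma fixC : Equiv.swap (pA i) (pB i) (pB k) = pB k :=
  Equiv.swap_apply_of_ne_of_ne (Ne.symm (hAC hk)) (Ne.symm (hBC hk))
lemma fixA' : Equiv.swap (pB i) (pB k) (pA i) = pA i :=
  Equiv.swap_apply_of_ne_of_ne (pA_ne_pB i) (hAC hk)

lemma braid_swap :
    Equiv.swap (pA i) (pB i) * Equiv.swap (pB i) (pB k) * Equiv.swap (pA i) (pB i)
      = Equiv.swap (pB i) (pB k) * Equiv.swap (pA i) (pB i) * Equiv.swap (pB i) (pB k) := by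
  have e1 := Equiv.swap_mul_swap_mul_swap (x := pB k) (y := pB i) (z := pA i)
    (Ne.symm (hBC hk)) (Ne.symm (hAC hk))
  have e2 := Equiv.swap_mul_swap_mul_swap (x := pA i) (y := pB i) (z := pB k)
    (pA_ne_pB i) (hAC hk)
  rw [Equiv.swap_comm (pB i) (pA i), Equiv.swap_comm (pB k) (pB i)] at e1
  rw [Equiv.swap_comm (pB k) (pA i)] at e2
  exact e1.trans e2.symm

lemma braid_ms (b : P N) :
    b * Equiv.swap (pA i) (pB i) * Equiv.swap (pB i) (pB k) * Equiv.swap (pA i) (pB i)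
      = b * Equiv.swap (pB i) (pB k) * Equiv.swap (pA i) (pB i) * Equiv.swap (pB i) (pB k) := by
  rw [mul_assoc b, mul_assoc b, braid_swap hk, ← mul_assoc b, ← mul_assoc b]

lemma three_cases (a : P N) {motive : Prop}
    (c1 : a (pA i) < a (pB i) → a (pB i) < a (pB k) → a (pA i) < a (pB k) → motive)
    (c2 : a (pA i) < a (pB i) → a (pB k) < a (pB i) → a (pA i) < a (pB k) → motive)
    (c3 : a (pA i) < a (pB i) → a (pB k) < a (pB i) → a (pB k) < a (pA i) → motive)
    (c4 : a (pB i) < a (pA i) → a (pB i) < a (pB k) → a (pA i) < a (pB k) → motive)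
    (c5 : a (pB i) < a (pA i) → a (pB i) < a (pB k) → a (pB k) < a (pA i) → motive)
    (c6 : a (pB i) < a (pA i) → a (pB k) < a (pB i) → a (pB k) < a (pA i) → motive) :
    motive := by
  have hinj := a.injective
  rcases lt_trichotomy (a (pA i)) (a (pB i)) with h1 | h1 | h1
  · rcases lt_trichotomy (a (pB i)) (a (pB k)) with h2 | h2 | h2
    · exact c1 h1 h2 (h1.trans h2)
    · exact absurd (hinj h2) (hBC hk)
    · rcases lt_trichotomy (a (pA i)) (a (pB k)) with h3 | h3 | h3
      · exact c2 h1 h2 h3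
      · exact absurd (hinj h3) (hAC hk)
      · exact c3 h1 h2 h3
  · exact absurd (hinj h1) (pA_ne_pB i)
  · rcases lt_trichotomy (a (pB i)) (a (pB k)) with h2 | h2 | h2
    · rcases lt_trichotomy (a (pA i)) (a (pB k)) with h3 | h3 | h3
      · exact c4 h1 h2 h3
      · exact absurd (hinj h3) (hAC hk)
      · exact c5 h1 h2 h3
    · exact absurd (hinj h2) (hBC hk)
    · exact c6 h1 h2 (h2.trans h1)

lemma deg0 (a : P N) :
    sigmaP N i (sigmaP N k (sigmaP N i a)) = sigmaP N k (sigmaP N i (sigmaP N k a)) := by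
  refine three_cases hk a ?_ ?_ ?_ ?_ ?_ ?_ <;>
  · intro ha hb hc
    simp [sigma_eq i, sigmak_eq hk, Equiv.Perm.mul_apply, Equiv.swap_apply_left,
      Equiv.swap_apply_right, fixC hk, fixA' hk, Equiv.mul_swap_mul_self, braid_ms hk,
      ha, hb, hc, asymm ha, asymm hb, asymm hc]

lemma deg3 (a : P N) :
    tauP N i (tauP N k (tauP N i a)) = tauP N k (tauP N i (tauP N k a)) := by
  simp only [tau_eq i, tauk_eq hk]
  exact braid_ms hk a

lemma deg1_dirac (a : P N) :
    (Measure.dirac (sigmaP N i (tauP N k (tauP N i a))) : Measure (P N))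
      + Measure.dirac (tauP N i (sigmaP N k (tauP N i a)))
      + Measure.dirac (tauP N i (tauP N k (sigmaP N i a)))
    = Measure.dirac (sigmaP N k (tauP N i (tauP N k a)))
      + Measure.dirac (tauP N k (sigmaP N i (tauP N k a)))
      + Measure.dirac (tauP N k (tauP N i (sigmaP N k a))) := by
  refine three_cases hk a ?_ ?_ ?_ ?_ ?_ ?_ <;>
  · intro ha hb hc
    simp only [sigma_eq i, sigmak_eq hk, tau_eq i, tauk_eq hk, Equiv.Perm.mul_apply,
      Equiv.swap_apply_left, Equiv.swap_apply_right, fixC hk, fixA' hk,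
      Equiv.mul_swap_mul_self, braid_ms hk,
      ha, hb, hc, asymm ha, asymm hb, asymm hc, if_true, if_false, ite_true, ite_false,
      not_lt_of_gt, if_pos, if_neg]
    try abel

lemma deg2_dirac (a : P N) :
    (Measure.dirac (sigmaP N i (sigmaP N k (tauP N i a))) : Measure (P N))
      + Measure.dirac (sigmaP N i (tauP N k (sigmaP N i a)))
      + Measure.dirac (tauP N i (sigmaP N k (sigmaP N i a)))
    = Measure.dirac (sigmaP N k (sigmaP N i (tauP N k a)))
      + Measure.dirac (sigmaP N k (tauP N i (sigmaP N k a)))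
      + Measure.dirac (tauP N k (sigmaP N i (sigmaP N k a))) := by
  refine three_cases hk a ?_ ?_ ?_ ?_ ?_ ?_ <;>
  · intro ha hb hc
    simp only [sigma_eq i, sigmak_eq hk, tau_eq i, tauk_eq hk, Equiv.Perm.mul_apply,
      Equiv.swap_apply_left, Equiv.swap_apply_right, fixC hk, fixA' hk,
      Equiv.mul_swap_mul_self, braid_ms hk,
      ha, hb, hc, asymm ha, asymm hb, asymm hc, if_true, if_false, ite_true, ite_false,
      if_pos, if_neg]
    try abel
end Braid

lemma map_ext3 (f₁ f₂ f₃ g₁ g₂ g₃ : P N → P N)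
    (h : ∀ a : P N, (Measure.dirac (f₁ a) : Measure (P N)) + Measure.dirac (f₂ a)
        + Measure.dirac (f₃ a)
        = Measure.dirac (g₁ a) + Measure.dirac (g₂ a) + Measure.dirac (g₃ a))
    (ν : Measure (P N)) :
    ν.map f₁ + ν.map f₂ + ν.map f₃ = ν.map g₁ + ν.map g₂ + ν.map g₃ := by
  have := map_ext (ι := Fin 3) (κ := Fin 3) ![f₁, f₂, f₃] ![g₁, g₂, g₃]
    (fun a => by simpa [Fin.sum_univ_three, add_assoc] using h a) ν
  simpa [Fin.sum_univ_three, add_assoc] using this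

section Braid2
variable {i k : Ltr N} (hk : k.1 = i.1 + 1)
include hk

lemma deg1_meas (ν : Measure (P N)) :
    ν.map (fun a => sigmaP N i (tauP N k (tauP N i a)))
      + ν.map (fun a => tauP N i (sigmaP N k (tauP N i a)))
      + ν.map (fun a => tauP N i (tauP N k (sigmaP N i a)))
    = ν.map (fun a => sigmaP N k (tauP N i (tauP N k a)))
      + ν.map (fun a => tauP N k (sigmaP N i (tauP N k a)))
      + ν.map (fun a => tauP N k (tauP N i (sigmaP N k a))) :=
  map_ext3 _ _ _ _ _ _ (fun a => deg1_dirac hk a) ν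

lemma deg2_meas (ν : Measure (P N)) :
    ν.map (fun a => sigmaP N i (sigmaP N k (tauP N i a)))
      + ν.map (fun a => sigmaP N i (tauP N k (sigmaP N i a)))
      + ν.map (fun a => tauP N i (sigmaP N k (sigmaP N i a)))
    = ν.map (fun a => sigmaP N k (sigmaP N i (tauP N k a)))
      + ν.map (fun a => sigmaP N k (tauP N i (sigmaP N k a)))
      + ν.map (fun a => tauP N k (sigmaP N i (sigmaP N k a))) :=
  map_ext3 _ _ _ _ _ _ (fun a => deg2_dirac hk a) ν

lemma piP_braid {q : ℝ≥0} (ν : Measure (P N)) :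
    piP N q i (piP N q k (piP N q i ν)) = piP N q k (piP N q i (piP N q k ν)) := by
  ext s hs
  have E1 := congrArg (fun μ : Measure (P N) => μ s) (deg1_meas hk ν)
  have E2 := congrArg (fun μ : Measure (P N) => μ s) (deg2_meas hk ν)
  simp only [Measure.add_apply, Measure.map_apply (meas_fn _) hs, preimage_comp3] at E1 E2
  have hT : tauP N i ⁻¹' (tauP N k ⁻¹' (tauP N i ⁻¹' s))
      = tauP N k ⁻¹' (tauP N i ⁻¹' (tauP N k ⁻¹' s)) := by
    ext a
    simp only [Set.mem_preimage]
    rw [show tauP N i (tauP N k (tauP N i a)) = tauP N k (tauP N i (tauP N k a)) from deg3 hk a]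
  have hS : sigmaP N i ⁻¹' (sigmaP N k ⁻¹' (sigmaP N i ⁻¹' s))
      = sigmaP N k ⁻¹' (sigmaP N i ⁻¹' (sigmaP N k ⁻¹' s)) := by
    ext a
    simp only [Set.mem_preimage]
    rw [show sigmaP N i (sigmaP N k (sigmaP N i a)) = sigmaP N k (sigmaP N i (sigmaP N k a))
      from deg0 hk a]
  calc (piP N q i (piP N q k (piP N q i ν))) s
      = (q:ℝ≥0∞)*(q:ℝ≥0∞)*(q:ℝ≥0∞) * ν (tauP N i ⁻¹' (tauP N k ⁻¹' (tauP N i ⁻¹' s)))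
        + (q:ℝ≥0∞)*(q:ℝ≥0∞)*((1-q:ℝ≥0):ℝ≥0∞)
          * (ν (tauP N i ⁻¹' (tauP N k ⁻¹' (sigmaP N i ⁻¹' s)))
            + ν (tauP N i ⁻¹' (sigmaP N k ⁻¹' (tauP N i ⁻¹' s)))
            + ν (sigmaP N i ⁻¹' (tauP N k ⁻¹' (tauP N i ⁻¹' s))))
        + (q:ℝ≥0∞)*((1-q:ℝ≥0):ℝ≥0∞)*((1-q:ℝ≥0):ℝ≥0∞)
          * (ν (tauP N i ⁻¹' (sigmaP N k ⁻¹' (sigmaP N i ⁻¹' s)))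
            + ν (sigmaP N i ⁻¹' (tauP N k ⁻¹' (sigmaP N i ⁻¹' s)))
            + ν (sigmaP N i ⁻¹' (sigmaP N k ⁻¹' (tauP N i ⁻¹' s))))
        + ((1-q:ℝ≥0):ℝ≥0∞)*((1-q:ℝ≥0):ℝ≥0∞)*((1-q:ℝ≥0):ℝ≥0∞)
          * ν (sigmaP N i ⁻¹' (sigmaP N k ⁻¹' (sigmaP N i ⁻¹' s))) := by
        simp only [piP_apply]; ring
    _ = (q:ℝ≥0∞)*(q:ℝ≥0∞)*(q:ℝ≥0∞) * ν (tauP N k ⁻¹' (tauP N i ⁻¹' (tauP N k ⁻¹' s)))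
        + (q:ℝ≥0∞)*(q:ℝ≥0∞)*((1-q:ℝ≥0):ℝ≥0∞)
          * (ν (tauP N k ⁻¹' (tauP N i ⁻¹' (sigmaP N k ⁻¹' s)))
            + ν (tauP N k ⁻¹' (sigmaP N i ⁻¹' (tauP N k ⁻¹' s)))
            + ν (sigmaP N k ⁻¹' (tauP N i ⁻¹' (tauP N k ⁻¹' s))))
        + (q:ℝ≥0∞)*((1-q:ℝ≥0):ℝ≥0∞)*((1-q:ℝ≥0):ℝ≥0∞)
          * (ν (tauP N k ⁻¹' (sigmaP N i ⁻¹' (sigmaP N k ⁻¹' s)))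
            + ν (sigmaP N k ⁻¹' (tauP N i ⁻¹' (sigmaP N k ⁻¹' s)))
            + ν (sigmaP N k ⁻¹' (sigmaP N i ⁻¹' (tauP N k ⁻¹' s))))
        + ((1-q:ℝ≥0):ℝ≥0∞)*((1-q:ℝ≥0):ℝ≥0∞)*((1-q:ℝ≥0):ℝ≥0∞)
          * ν (sigmaP N k ⁻¹' (sigmaP N i ⁻¹' (sigmaP N k ⁻¹' s))) := by
        rw [hT, hS, E1, E2]
    _ = (piP N q k (piP N q i (piP N q k ν))) s := by
        simp only [piP_apply]; ring

end Braid2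

lemma pB_val (i : Ltr N) : (pB i).1 = (pA i).1 + 1 := by
  have := i.2.1; simp [pA, pB]; omega
lemma pA_lt_pB (i : Ltr N) : pA i < pB i := by
  rw [Fin.lt_def, pB_val]; omega

/-- the word product -/
def wp (w : List (Ltr N)) : P N := (w.map (adjT N)).prod
/-- reduced words -/
def Reduced (w : List (Ltr N)) : Prop := ∀ v, wp v = wp w → w.length ≤ v.length

lemma wp_nil : wp ([] : List (Ltr N)) = 1 := rfl
lemma wp_cons (i : Ltr N) (w : List (Ltr N)) : wp (i :: w) = adjT N i * wp w := by
  simp [wp]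
lemma wp_append (u v : List (Ltr N)) : wp (u ++ v) = wp u * wp v := by
  simp [wp]
lemma wp_concat (u : List (Ltr N)) (i : Ltr N) : wp (u ++ [i]) = wp u * adjT N i := by
  simp [wp]

/-- inversion set -/
def invSet (x : P N) : Finset (Fin N × Fin N) :=
  Finset.univ.filter (fun p => p.1 < p.2 ∧ x p.2 < x p.1)
def inv (x : P N) : ℕ := (invSet x).card

lemma mem_invSet {x : P N} {p : Fin N × Fin N} :
    p ∈ invSet x ↔ p.1 < p.2 ∧ x p.2 < x p.1 := by simp [invSet]

/-- swapping a strictly increasing non-(A,B) pair keeps it increasing -/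
lemma swap_val (i : Ltr N) (w : Fin N) :
    ((Equiv.swap (pA i) (pB i)) w).1 =
      if w.1 = (pA i).1 then (pB i).1 else if w.1 = (pB i).1 then (pA i).1 else w.1 := by
  have hB := pB_val i
  rcases eq_or_ne w (pA i) with h | h
  · subst h; simp [Equiv.swap_apply_left]
  · rcases eq_or_ne w (pB i) with h2 | h2
    · subst h2
      rw [Equiv.swap_apply_right, if_neg (by omega), if_pos rfl]
    · rw [Equiv.swap_apply_of_ne_of_ne h h2,
        if_neg (fun hh => h (Fin.ext hh)), if_neg (fun hh => h2 (Fin.ext hh))]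

lemma swap_lt {i : Ltr N} {u v : Fin N} (huv : u < v) (hne : (u, v) ≠ (pA i, pB i)) :
    Equiv.swap (pA i) (pB i) u < Equiv.swap (pA i) (pB i) v := by
  have hB := pB_val i
  have huv' : u.1 < v.1 := huv
  have hne' : ¬(u.1 = (pA i).1 ∧ v.1 = (pB i).1) := by
    rintro ⟨e1, e2⟩; exact hne (Prod.ext (Fin.ext e1) (Fin.ext e2))
  rw [Fin.lt_def, swap_val i u, swap_val i v]
  split_ifs <;> omega


lemma card_erase_invSet (i : Ltr N) (x : P N) :
    ((invSet (x * adjT N i)).erase (pA i, pB i)).card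
      = ((invSet x).erase (pA i, pB i)).card := by
  have hswap : ∀ u : Fin N, Equiv.swap (pA i) (pB i) (Equiv.swap (pA i) (pB i) u) = u :=
    fun u => Equiv.swap_apply_self _ _ u
  have hv : ∀ u : Fin N, (x * adjT N i) (Equiv.swap (pA i) (pB i) u) = x u := by
    intro u; simp [adjT_eq, Equiv.Perm.mul_apply, hswap]
  refine Finset.card_bij' (fun p _ => (Equiv.swap (pA i) (pB i) p.1, Equiv.swap (pA i) (pB i) p.2))
    (fun p _ => (Equiv.swap (pA i) (pB i) p.1, Equiv.swap (pA i) (pB i) p.2)) ?_ ?_ ?_ ?_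
  · -- maps invSet (x*s) erase into invSet x erase
    intro p hp
    rw [Finset.mem_erase, mem_invSet] at hp
    obtain ⟨hpne, hlt, hinv⟩ := hp
    rw [Finset.mem_erase, mem_invSet]
    have hne' : (p.1, p.2) ≠ (pA i, pB i) := by simpa using hpne
    refine ⟨?_, swap_lt hlt hne', ?_⟩
    · -- image ≠ (A,B)
      simp only [Ne, Prod.ext_iff]
      rintro ⟨hh1, hh2⟩
      have e1 : p.1 = pB i := by
        have := congrArg (Equiv.swap (pA i) (pB i)) hh1
        rwa [hswap, Equiv.swap_apply_left] at this
      have e2 : p.2 = pA i := by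
        have := congrArg (Equiv.swap (pA i) (pB i)) hh2
        rwa [hswap, Equiv.swap_apply_right] at this
      rw [e1, e2] at hlt
      exact absurd hlt (asymm (pA_lt_pB i))
    · -- inversion condition
      have e1 : x (Equiv.swap (pA i) (pB i) p.1) = (x * adjT N i) p.1 := by
        simp [adjT_eq, Equiv.Perm.mul_apply]
      have e2 : x (Equiv.swap (pA i) (pB i) p.2) = (x * adjT N i) p.2 := by
        simp [adjT_eq, Equiv.Perm.mul_apply]
      rw [e1, e2]; exact hinv
  · -- reverse direction
    intro p hp
    rw [Finset.mem_erase, mem_invSet] at hp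
    obtain ⟨hpne, hlt, hinv⟩ := hp
    rw [Finset.mem_erase, mem_invSet]
    have hne' : (p.1, p.2) ≠ (pA i, pB i) := by simpa using hpne
    refine ⟨?_, swap_lt hlt hne', ?_⟩
    · simp only [Ne, Prod.ext_iff]
      rintro ⟨hh1, hh2⟩
      have e1 : p.1 = pB i := by
        have := congrArg (Equiv.swap (pA i) (pB i)) hh1
        rwa [hswap, Equiv.swap_apply_left] at this
      have e2 : p.2 = pA i := by
        have := congrArg (Equiv.swap (pA i) (pB i)) hh2
        rwa [hswap, Equiv.swap_apply_right] at this
      rw [e1, e2] at hlt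
      exact absurd hlt (asymm (pA_lt_pB i))
    · rw [hv, hv]; exact hinv
  · intro p _; simp [hswap]
  · intro p _; simp [hswap]

lemma inv_mul_asc {i : Ltr N} {x : P N} (h : x (pA i) < x (pB i)) :
    inv (x * adjT N i) = inv x + 1 := by
  have hmem : (pA i, pB i) ∈ invSet (x * adjT N i) := by
    rw [mem_invSet]
    refine ⟨pA_lt_pB i, ?_⟩
    simpa [adjT_eq, Equiv.Perm.mul_apply, Equiv.swap_apply_left, Equiv.swap_apply_right] using h
  have hnot : (pA i, pB i) ∉ invSet x := by
    rw [mem_invSet]; push_neg; intro _; exact le_of_lt h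
  have h1 := Finset.card_erase_add_one hmem
  unfold inv
  rw [← h1, card_erase_invSet i x, Finset.erase_eq_of_notMem hnot]

lemma inv_mul_desc {i : Ltr N} {x : P N} (h : x (pB i) < x (pA i)) :
    inv x = inv (x * adjT N i) + 1 := by
  have hy : (x * adjT N i) (pA i) < (x * adjT N i) (pB i) := by
    simpa [adjT_eq, Equiv.Perm.mul_apply, Equiv.swap_apply_left, Equiv.swap_apply_right] using h
  have := inv_mul_asc hy
  rwa [show x * adjT N i * adjT N i = x from by
    rw [adjT_eq]; exact Equiv.mul_swap_mul_self _ _ _] at this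


lemma inv_one : inv (1 : P N) = 0 := by
  unfold inv invSet
  rw [Finset.card_eq_zero, Finset.filter_eq_empty_iff]
  rintro p -
  rintro ⟨h1, h2⟩
  simp only [Equiv.Perm.coe_one, id_eq] at h2
  exact absurd h1 (asymm h2)

/-- a strictly monotone permutation of Fin N is the identity -/
lemma strictMono_eq_one {x : P N} (h : StrictMono x) : x = 1 := by
  have le1 : ∀ {f : P N}, StrictMono f → ∀ v : Fin N, v.1 ≤ (f v).1 := by
    intro f hf v
    suffices hh : ∀ n (hn : n < N), n ≤ (f ⟨n, hn⟩).1 by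
      have := hh v.1 v.2
      simpa using this
    intro n
    induction n with
    | zero => exact fun _ => Nat.zero_le _
    | succ m ih =>
      intro hn
      have h2 : f ⟨m, by omega⟩ < f ⟨m + 1, hn⟩ := hf (by simp [Fin.lt_def])
      have h3 := ih (by omega)
      have h4 : (f ⟨m, by omega⟩).1 < (f ⟨m + 1, hn⟩).1 := h2
      omega
  have hsymm : StrictMono x.symm := by
    intro u v huv
    rcases lt_trichotomy (x.symm u) (x.symm v) with h1 | h1 | h1
    · exact h1
    · exact absurd (congrArg x h1) (by simp; exact Fin.ne_of_lt huv)
    · have := h h1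
      simp only [Equiv.apply_symm_apply] at this
      exact absurd this (asymm huv)
  ext v
  have h1 := le1 h v
  have h2 := le1 hsymm (x v)
  simp only [Equiv.symm_apply_apply] at h2
  simp only [Equiv.Perm.coe_one, id_eq]
  exact congrArg Fin.val (Fin.ext (le_antisymm h2 h1))

/-- existence of a descent for a non-identity permutation -/
lemma exists_descent {x : P N} (h : x ≠ 1) : ∃ i : Ltr N, x (pB i) < x (pA i) := by
  by_contra hno
  push_neg at hno
  apply h
  apply strictMono_eq_one
  -- adjacent increases
  have hadj : ∀ m : ℕ, ∀ hm : m + 1 < N, x ⟨m, by omega⟩ < x ⟨m + 1, hm⟩ := by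
    intro m hm
    set i : Ltr N := ⟨m + 1, by omega⟩ with hi
    have hA : pA i = ⟨m, by omega⟩ := by simp [pA, hi]
    have hB : pB i = ⟨m + 1, hm⟩ := by simp [pB, hi]
    have := hno i
    rw [hA, hB] at this
    rcases lt_trichotomy (x ⟨m, by omega⟩) (x ⟨m + 1, hm⟩) with h1 | h1 | h1
    · exact h1
    · exact absurd (x.injective h1) (by simp [Fin.ext_iff])
    · exact absurd h1 (not_lt.2 this)
  -- chain
  have chain : ∀ d m : ℕ, ∀ hmd : m + d + 1 < N, x ⟨m, by omega⟩ < x ⟨m + d + 1, hmd⟩ := by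
    intro d
    induction d with
    | zero => intro m hmd; exact hadj m hmd
    | succ e ih =>
      intro m hmd
      have h1 := ih m (by omega)
      have h2 := hadj (m + e + 1) (by omega)
      refine h1.trans ?_
      convert h2 using 2
      all_goals first | rfl | (ext; simp; omega)
  intro u v huv
  have huv' : u.1 < v.1 := huv
  have := chain (v.1 - u.1 - 1) u.1 (by omega)
  have e1 : (⟨u.1, by omega⟩ : Fin N) = u := by simp
  have e2 : (⟨u.1 + (v.1 - u.1 - 1) + 1, by omega⟩ : Fin N) = v := by
    apply Fin.ext; simp; omega
  rwa [e1, e2] at this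


lemma inv_le_length (w : List (Ltr N)) : inv (wp w) ≤ w.length := by
  induction w using List.reverseRecOn with
  | nil => simp [wp_nil, inv_one]
  | append_singleton u i ih =>
    rw [wp_concat]
    rcases lt_trichotomy (wp u (pA i)) (wp u (pB i)) with h | h | h
    · rw [inv_mul_asc h]; simpa using ih
    · exact absurd ((wp u).injective h) (pA_ne_pB i)
    · have := inv_mul_desc h
      simp only [List.length_append, List.length_singleton]
      omega

lemma exists_word (x : P N) : ∃ w : List (Ltr N), wp w = x ∧ w.length = inv x := by
  generalize hn : inv x = n
  induction n using Nat.strong_induction_on generalizing x with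
  | _ n ih =>
    rcases eq_or_ne x 1 with rfl | hx
    · exact ⟨[], wp_nil, by rw [← hn, inv_one]; rfl⟩
    · obtain ⟨i, hdesc⟩ := exists_descent hx
      have hstep := inv_mul_desc hdesc
      obtain ⟨w, hw1, hw2⟩ := ih (inv (x * adjT N i)) (by omega) (x * adjT N i) rfl
      refine ⟨w ++ [i], ?_, ?_⟩
      · rw [wp_concat, hw1, adjT_eq, Equiv.mul_swap_mul_self]
      · simp only [List.length_append, List.length_singleton]
        omega

lemma reduced_iff (w : List (Ltr N)) : Reduced w ↔ w.length = inv (wp w) := by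
  constructor
  · intro hred
    obtain ⟨w₀, hw1, hw2⟩ := exists_word (wp w)
    have h1 := hred w₀ hw1
    have h2 := inv_le_length w
    omega
  · intro h v hv
    rw [h, ← hv]
    exact inv_le_length v

lemma reduced_nil : Reduced ([] : List (Ltr N)) := fun _ _ => Nat.zero_le _

lemma reduced_prefix {u v : List (Ltr N)} (h : Reduced (u ++ v)) : Reduced u := by
  intro t ht
  have h2 : wp (t ++ v) = wp (u ++ v) := by rw [wp_append, wp_append, ht]
  have := h (t ++ v) h2
  simp only [List.length_append] at this
  omega

lemma reduced_concat_iff {u : List (Ltr N)} (hu : Reduced u) (i : Ltr N) :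
    Reduced (u ++ [i]) ↔ wp u (pA i) < wp u (pB i) := by
  have hlen : u.length = inv (wp u) := (reduced_iff u).1 hu
  constructor
  · intro hred
    rcases lt_trichotomy (wp u (pA i)) (wp u (pB i)) with h | h | h
    · exact h
    · exact absurd ((wp u).injective h) (pA_ne_pB i)
    · exfalso
      have hlen2 := (reduced_iff _).1 hred
      rw [wp_concat] at hlen2
      have := inv_mul_desc h
      simp only [List.length_append, List.length_singleton] at hlen2
      omega
  · intro h
    rw [reduced_iff, wp_concat, inv_mul_asc h]
    simp only [List.length_append, List.length_singleton]
    omega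

lemma not_reduced_concat_descent {u : List (Ltr N)} (hu : Reduced u) (i : Ltr N)
    (h : ¬ Reduced (u ++ [i])) : wp u (pB i) < wp u (pA i) := by
  rcases lt_trichotomy (wp u (pA i)) (wp u (pB i)) with h1 | h1 | h1
  · exact absurd ((reduced_concat_iff hu i).2 h1) h
  · exact absurd ((wp u).injective h1) (pA_ne_pB i)
  · exact h1



section BraidGroup
variable {i k : Ltr N}

lemma adjk_eq (hk : k.1 = i.1 + 1) : adjT N k = Equiv.swap (pB i) (pB k) := by
  rw [adjT_eq, hpAk hk]

lemma braid_adj (hk : k.1 = i.1 + 1) :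
    adjT N i * adjT N k * adjT N i = adjT N k * adjT N i * adjT N k := by
  rw [adjT_eq i, adjk_eq hk]; exact braid_swap hk

lemma comm_adj (hd : i.1 + 2 ≤ k.1 ∨ k.1 + 2 ≤ i.1) :
    adjT N i * adjT N k = adjT N k * adjT N i := by
  rw [adjT_eq i, adjT_eq k]; exact comm_swap hd

end BraidGroup

/-- elementary braid/commutation moves on words -/
inductive Mv : List (Ltr N) → List (Ltr N) → Prop
  | comm : ∀ (w₁ w₂ : List (Ltr N)) (a b : Ltr N), (a.1 + 2 ≤ b.1 ∨ b.1 + 2 ≤ a.1) →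
      Mv (w₁ ++ a :: b :: w₂) (w₁ ++ b :: a :: w₂)
  | braid : ∀ (w₁ w₂ : List (Ltr N)) (a b : Ltr N), b.1 = a.1 + 1 →
      Mv (w₁ ++ a :: b :: a :: w₂) (w₁ ++ b :: a :: b :: w₂)

/-- braid equivalence of words -/
def BE : List (Ltr N) → List (Ltr N) → Prop := Relation.EqvGen Mv

lemma Mv.wp_eq {u v : List (Ltr N)} (h : Mv u v) : wp u = wp v := by
  cases h with
  | comm w₁ w₂ a b hd =>
    have key : ∀ t : P N, adjT N a * (adjT N b * t) = adjT N b * (adjT N a * t) := by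
      intro t; rw [← mul_assoc, comm_adj hd, mul_assoc]
    simp only [wp_append, wp_cons, key]
  | braid w₁ w₂ a b hb =>
    have key : ∀ t : P N, adjT N a * (adjT N b * (adjT N a * t))
        = adjT N b * (adjT N a * (adjT N b * t)) := by
      intro t
      calc adjT N a * (adjT N b * (adjT N a * t))
          = (adjT N a * adjT N b * adjT N a) * t := by group
        _ = (adjT N b * adjT N a * adjT N b) * t := by rw [braid_adj hb]
        _ = adjT N b * (adjT N a * (adjT N b * t)) := by group
    simp only [wp_append, wp_cons, key]

lemma Mv.length_eq {u v : List (Ltr N)} (h : Mv u v) : u.length = v.length := by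
  cases h <;> simp

lemma Mv.append {u v : List (Ltr N)} (h : Mv u v) (t : List (Ltr N)) :
    Mv (u ++ t) (v ++ t) := by
  cases h with
  | comm w₁ w₂ a b hd => simpa [List.append_assoc] using Mv.comm w₁ (w₂ ++ t) a b hd
  | braid w₁ w₂ a b hb => simpa [List.append_assoc] using Mv.braid w₁ (w₂ ++ t) a b hb

lemma BE.refl (u : List (Ltr N)) : BE u u := Relation.EqvGen.refl u
lemma BE.rfl {u : List (Ltr N)} : BE u u := Relation.EqvGen.refl u
lemma BE.symm {u v : List (Ltr N)} (h : BE u v) : BE v u := Relation.EqvGen.symm _ _ h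
lemma BE.trans {u v w : List (Ltr N)} (h : BE u v) (h2 : BE v w) : BE u w :=
  Relation.EqvGen.trans _ _ _ h h2
lemma BE.of_mv {u v : List (Ltr N)} (h : Mv u v) : BE u v := Relation.EqvGen.rel _ _ h

lemma BE.wp_eq {u v : List (Ltr N)} (h : BE u v) : wp u = wp v := by
  induction h with
  | rel _ _ h => exact h.wp_eq
  | refl => rfl
  | symm _ _ _ ih => exact ih.symm
  | trans _ _ _ _ _ ih1 ih2 => exact ih1.trans ih2

lemma BE.length_eq {u v : List (Ltr N)} (h : BE u v) : u.length = v.length := by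
  induction h with
  | rel _ _ h => exact h.length_eq
  | refl => rfl
  | symm _ _ _ ih => exact ih.symm
  | trans _ _ _ _ _ ih1 ih2 => exact ih1.trans ih2

lemma BE.append {u v : List (Ltr N)} (h : BE u v) (t : List (Ltr N)) :
    BE (u ++ t) (v ++ t) := by
  induction h with
  | rel _ _ h => exact BE.of_mv (h.append t)
  | refl => exact BE.rfl
  | symm _ _ _ ih => exact ih.symm
  | trans _ _ _ _ _ ih1 ih2 => exact ih1.trans ih2

lemma BE.reduced {u v : List (Ltr N)} (h : BE u v) (hu : Reduced u) : Reduced v := by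
  intro t ht
  rw [← h.length_eq]
  exact hu t (ht.trans h.wp_eq.symm)


lemma exists_BE_concat : ∀ n (u : List (Ltr N)), u.length = n → Reduced u →
    ∀ i : Ltr N, wp u (pB i) < wp u (pA i) → ∃ v, BE u (v ++ [i]) := by
  intro n
  induction n using Nat.strong_induction_on with
  | _ n ih =>
  intro u hlen hu i hdesc
  rcases List.eq_nil_or_concat u with rfl | ⟨u', k, rfl⟩
  · rw [wp_nil] at hdesc
    exact absurd hdesc (asymm (pA_lt_pB i))
  rw [List.concat_eq_append] at *
  by_cases hki : k = i
  · subst hki; exact ⟨u', BE.rfl⟩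
  have hu' : Reduced u' := reduced_prefix hu
  have hyasc : wp u' (pA k) < wp u' (pB k) := (reduced_concat_iff hu' k).1 hu
  have hlen' : u'.length + 1 = n := by simpa using hlen
  have hxv : ∀ p, wp (u' ++ [k]) p = wp u' (adjT N k p) := by
    intro p; rw [wp_concat]; rfl
  have hki' : k.1 ≠ i.1 := fun h => hki (Subtype.ext h)
  rcases show (i.1 + 2 ≤ k.1 ∨ k.1 + 2 ≤ i.1) ∨ k.1 = i.1 + 1 ∨ i.1 = k.1 + 1 by omega
    with hd | hd | hd
  · -- distant commuting case
    have hdesc' : wp u' (pB i) < wp u' (pA i) := by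
      have e1 : adjT N k (pA i) = pA i := by rw [adjT_eq k]; exact fixA hd
      have e2 : adjT N k (pB i) = pB i := by rw [adjT_eq k]; exact fixB hd
      rw [hxv, hxv, e1, e2] at hdesc
      exact hdesc
    obtain ⟨v', hBE⟩ := ih u'.length (by omega) u' rfl hu' i hdesc'
    refine ⟨v' ++ [k], ?_⟩
    have h1 : BE (u' ++ [k]) ((v' ++ [i]) ++ [k]) := hBE.append [k]
    refine h1.trans (BE.of_mv ?_)
    rw [List.append_assoc, List.append_assoc]
    exact Mv.comm v' [] i k hd
  · -- adjacent case k = i + 1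
    have e1 : adjT N k (pA i) = pA i := by rw [adjk_eq hd]; exact fixA' hd
    have e2 : adjT N k (pB i) = pB k := by rw [adjk_eq hd]; exact Equiv.swap_apply_left _ _
    have hCA : wp u' (pB k) < wp u' (pA i) := by rw [hxv, hxv, e1, e2] at hdesc; exact hdesc
    have hBC : wp u' (pB i) < wp u' (pB k) := by rwa [hpAk hd] at hyasc
    obtain ⟨w, hBE1⟩ := ih u'.length (by omega) u' rfl hu' i (hBC.trans hCA)
    have hwred : Reduced (w ++ [i]) := hBE1.reduced hu'
    have hzv : ∀ p, wp u' p = wp w (adjT N i p) := by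
      intro p
      have : wp (w ++ [i]) = wp u' := hBE1.wp_eq.symm
      rw [← this, wp_concat]; rfl
    have z1 : wp w (pA k) = wp u' (pA i) := by
      rw [hpAk hd, hzv (pA i), adjT_eq i, Equiv.swap_apply_left]
    have z2 : wp w (pB k) = wp u' (pB k) := by
      rw [hzv (pB k), adjT_eq i, fixC hd]
    have hzdesc : wp w (pB k) < wp w (pA k) := by rw [z1, z2]; exact hCA
    have hwlen : w.length + 1 = u'.length := by
      have := hBE1.length_eq; simpa using this.symm
    obtain ⟨w', hBE2⟩ := ih w.length (by omega) w rfl (reduced_prefix hwred) k hzdesc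
    refine ⟨w' ++ [i] ++ [k], ?_⟩
    have c1 : BE (u' ++ [k]) ((w ++ [i]) ++ [k]) := hBE1.append [k]
    have c2 : BE ((w ++ [i]) ++ [k]) (((w' ++ [k]) ++ [i]) ++ [k]) :=
      (hBE2.append [i]).append [k]
    have c3 : BE (((w' ++ [k]) ++ [i]) ++ [k]) ((w' ++ [i] ++ [k]) ++ [i]) := by
      have hm := Mv.braid w' [] i k hd
      have e3 : ((w' ++ [k]) ++ [i]) ++ [k] = w' ++ k :: i :: k :: [] := by simp
      have e4 : (w' ++ [i] ++ [k]) ++ [i] = w' ++ i :: k :: i :: [] := by simp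
      rw [e3, e4]
      exact (BE.of_mv hm).symm
    exact (c1.trans c2).trans c3
  · -- adjacent case i = k + 1
    have e1 : adjT N k (pA i) = pA k := by
      rw [adjT_eq k, hpAk (i := k) (k := i) hd]; exact Equiv.swap_apply_right _ _
    have e2 : adjT N k (pB i) = pB i := by
      rw [adjT_eq k]; exact fixC (i := k) (k := i) hd
    have hCA : wp u' (pB i) < wp u' (pA k) := by rw [hxv, hxv, e1, e2] at hdesc; exact hdesc
    have hAB : wp u' (pA k) < wp u' (pA i) := by
      rwa [← hpAk (i := k) (k := i) hd] at hyasc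
    obtain ⟨w, hBE1⟩ := ih u'.length (by omega) u' rfl hu' i (hCA.trans hAB)
    have hwred : Reduced (w ++ [i]) := hBE1.reduced hu'
    have hzv : ∀ p, wp u' p = wp w (adjT N i p) := by
      intro p
      have : wp (w ++ [i]) = wp u' := hBE1.wp_eq.symm
      rw [← this, wp_concat]; rfl
    have z1 : wp w (pA k) = wp u' (pA k) := by
      rw [hzv (pA k), adjT_eq i, hpAk (i := k) (k := i) hd, fixA' (i := k) (k := i) hd]
    have z2 : wp w (pB k) = wp u' (pB i) := by
      rw [hzv (pB i), adjT_eq i, Equiv.swap_apply_right, hpAk (i := k) (k := i) hd]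
    have hzdesc : wp w (pB k) < wp w (pA k) := by rw [z1, z2]; exact hCA
    have hwlen : w.length + 1 = u'.length := by
      have := hBE1.length_eq; simpa using this.symm
    obtain ⟨w', hBE2⟩ := ih w.length (by omega) w rfl (reduced_prefix hwred) k hzdesc
    refine ⟨w' ++ [i] ++ [k], ?_⟩
    have c1 : BE (u' ++ [k]) ((w ++ [i]) ++ [k]) := hBE1.append [k]
    have c2 : BE ((w ++ [i]) ++ [k]) (((w' ++ [k]) ++ [i]) ++ [k]) :=
      (hBE2.append [i]).append [k]
    have c3 : BE (((w' ++ [k]) ++ [i]) ++ [k]) ((w' ++ [i] ++ [k]) ++ [i]) := by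
      have hm := Mv.braid w' [] k i hd
      have e3 : ((w' ++ [k]) ++ [i]) ++ [k] = w' ++ k :: i :: k :: [] := by simp
      have e4 : (w' ++ [i] ++ [k]) ++ [i] = w' ++ i :: k :: i :: [] := by simp
      rw [e3, e4]
      exact BE.of_mv hm
    exact (c1.trans c2).trans c3


/-- the operator associated with a word -/
noncomputable def PiW (q : ℝ≥0) (w : List (Ltr N)) (ν : Measure (P N)) : Measure (P N) :=
  w.foldl (fun ρ i => piP N q i ρ) ν

lemma PiW_append (q : ℝ≥0) (u v : List (Ltr N)) (ν : Measure (P N)) :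
    PiW q (u ++ v) ν = PiW q v (PiW q u ν) := by
  simp [PiW]

lemma PiW_concat (q : ℝ≥0) (u : List (Ltr N)) (i : Ltr N) (ν : Measure (P N)) :
    PiW q (u ++ [i]) ν = piP N q i (PiW q u ν) := by
  simp [PiW]

lemma Mv.pi {q : ℝ≥0} {u v : List (Ltr N)} (h : Mv u v) (ν : Measure (P N)) :
    PiW q u ν = PiW q v ν := by
  cases h with
  | comm w₁ w₂ a b hd =>
    rw [show w₁ ++ a :: b :: w₂ = (w₁ ++ [a, b]) ++ w₂ by simp, PiW_append, PiW_append]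
    rw [show w₁ ++ b :: a :: w₂ = (w₁ ++ [b, a]) ++ w₂ by simp, PiW_append, PiW_append]
    congr 1
    exact piP_comm (Or.symm hd) (PiW q w₁ ν)
  | braid w₁ w₂ a b hb =>
    rw [show w₁ ++ a :: b :: a :: w₂ = (w₁ ++ [a, b, a]) ++ w₂ by simp, PiW_append, PiW_append]
    rw [show w₁ ++ b :: a :: b :: w₂ = (w₁ ++ [b, a, b]) ++ w₂ by simp, PiW_append, PiW_append]
    congr 1
    exact piP_braid hb (PiW q w₁ ν)

lemma BE.pi {q : ℝ≥0} {u v : List (Ltr N)} (h : BE u v) (ν : Measure (P N)) :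
    PiW q u ν = PiW q v ν := by
  induction h with
  | rel _ _ h => exact h.pi ν
  | refl => rfl
  | symm _ _ _ ih => exact ih.symm
  | trans _ _ _ _ _ ih1 ih2 => exact ih1.trans ih2

lemma piP_zero (q : ℝ≥0) (i : Ltr N) : piP N q i 0 = 0 := by
  simp [piP]

lemma piP_add (q : ℝ≥0) (i : Ltr N) (μ ρ : Measure (P N)) :
    piP N q i (μ + ρ) = piP N q i μ + piP N q i ρ := by
  simp only [piP, Measure.map_add _ _ (meas_fn _), smul_add]
  exact add_add_add_comm _ _ _ _

lemma piP_smul (q : ℝ≥0) (i : Ltr N) (c : ℝ≥0) (μ : Measure (P N)) :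
    piP N q i (c • μ) = c • piP N q i μ := by
  simp only [piP, Measure.map_smul, smul_add]
  rw [smul_comm q c, smul_comm (1 - q) c]

lemma piP_finset_sum (q : ℝ≥0) (i : Ltr N) {ι : Type} (s : Finset ι)
    (f : ι → Measure (P N)) :
    piP N q i (∑ j ∈ s, f j) = ∑ j ∈ s, piP N q i (f j) := by
  classical
  induction s using Finset.induction_on with
  | empty => simp [piP_zero]
  | insert _ _ h ih => rw [Finset.sum_insert h, Finset.sum_insert h, piP_add, ih]

lemma KL {q : ℝ≥0} (hq : q ≤ 1) {u : List (Ltr N)} (hu : Reduced u) (i : Ltr N) :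
    ∃ v₁ v₂, Reduced v₁ ∧ Reduced v₂ ∧
      ∀ ν, PiW q (u ++ [i]) ν = q • PiW q v₁ ν + (1 - q) • PiW q v₂ ν := by
  by_cases hr : Reduced (u ++ [i])
  · refine ⟨u ++ [i], u ++ [i], hr, hr, fun ν => ?_⟩
    rw [← add_smul, add_tsub_cancel_of_le hq, one_smul]
  · have hdesc := not_reduced_concat_descent hu i hr
    obtain ⟨v, hBE⟩ := exists_BE_concat u.length u rfl hu i hdesc
    have hRvi : Reduced (v ++ [i]) := hBE.reduced hu
    have hRv : Reduced v := reduced_prefix hRvi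
    refine ⟨v, v ++ [i], hRv, hRvi, fun ν => ?_⟩
    have h1 := (hBE.append [i]).pi (q := q) ν
    rw [h1, PiW_concat, PiW_concat]
    exact piP_quad hq i (PiW q v ν)

lemma main {q : ℝ≥0} (hq : q ≤ 1) (w : List (Ltr N)) :
    ∃ (m : ℕ) (ws : Fin m → List (Ltr N)) (lam : Fin m → ℝ≥0),
      (∀ j, Reduced (ws j)) ∧ (∑ j, lam j) = 1 ∧
      ∀ ν : Measure (P N), PiW q w ν = ∑ j, lam j • PiW q (ws j) ν := by
  induction w using List.reverseRecOn with
  | nil =>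
    refine ⟨1, ![[]], ![1], fun j => ?_, by simp, fun ν => ?_⟩
    · fin_cases j; exact reduced_nil
    · simp [PiW]
  | append_singleton u i IH =>
    obtain ⟨m, ws, lam, hred, hsum, hPi⟩ := IH
    choose v₁ v₂ hv₁ hv₂ hKL using fun j : Fin m => KL hq (hred j) i
    refine ⟨m + m,
      fun j => Fin.addCases (fun j1 => v₁ j1) (fun j2 => v₂ j2) j,
      fun j => Fin.addCases (fun j1 => lam j1 * q) (fun j2 => lam j2 * (1 - q)) j,
      fun j => ?_, ?_, fun ν => ?_⟩
    · exact Fin.addCases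
        (motive := fun j => Reduced (Fin.addCases (fun j1 => v₁ j1) (fun j2 => v₂ j2) j))
        (fun j1 => by simp only [Fin.addCases_left]; exact hv₁ j1)
        (fun j2 => by simp only [Fin.addCases_right]; exact hv₂ j2) j
    · rw [Fin.sum_univ_add]
      simp only [Fin.addCases_left, Fin.addCases_right]
      rw [← Finset.sum_mul, ← Finset.sum_mul, hsum, one_mul, one_mul,
        add_tsub_cancel_of_le hq]
    · rw [PiW_concat, hPi ν, piP_finset_sum]
      have step : ∀ j : Fin m, piP N q i (lam j • PiW q (ws j) ν)
          = (lam j * q) • PiW q (v₁ j) ν + (lam j * (1 - q)) • PiW q (v₂ j) ν := by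
        intro j
        rw [piP_smul, ← PiW_concat, hKL j ν, smul_add, smul_smul, smul_smul]
      rw [Finset.sum_congr rfl (fun j _ => step j), Finset.sum_add_distrib, Fin.sum_univ_add]
      simp only [Fin.addCases_left, Fin.addCases_right]

end PiPProof

/-- Every word of operators `π_{i_n} ∘ ⋯ ∘ π_{i_1}` equals, as a map on
probability measures on `S_N`, a convex combination of operators corresponding
to reduced words (words `(j_1, …, j_ℓ)` such that every word of adjacent
transpositions with the same product has length at least `ℓ`). -/
theorem piP_word_convex_combination_of_reduced (q : ℝ≥0) (hq : q ≤ 1) (N : ℕ)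
    (hN : 2 ≤ N) (w : List {i : ℕ // 1 ≤ i ∧ i < N}) :
    ∃ (m : ℕ) (ws : Fin m → List {i : ℕ // 1 ≤ i ∧ i < N}) (lam : Fin m → ℝ≥0),
      (∀ j, ∀ v : List {i : ℕ // 1 ≤ i ∧ i < N},
        (v.map (adjT N)).prod = ((ws j).map (adjT N)).prod →
          (ws j).length ≤ v.length) ∧
      (∑ j, lam j) = 1 ∧
      ∀ ν : Measure (Equiv.Perm (Fin N)), IsProbabilityMeasure ν →
        w.foldl (fun ρ i => piP N q i ρ) ν =
          ∑ j, lam j • (ws j).foldl (fun ρ i => piP N q i ρ) ν := by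
  obtain ⟨m, ws, lam, hred, hsum, hPi⟩ := PiPProof.main (N := N) hq w
  exact ⟨m, ws, lam, fun j v hv => hred j v hv, hsum, fun ν _ => hPi ν⟩
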